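/- Let ℓ : ℕ → ℝ be nonnegative, nondecreasing, concave with ℓ(0)=0, and let α_i, β_i (1 ≤ i ≤ N) be the coefficients from its representation as a linear combination of the functions ℓ_B (i.e., α_i = i·(2ℓ(i)−ℓ(i+1)−ℓ(i−1)), β_i = i, with ℓ(N+1)=ℓ(N)). Then for every nondecreasing execution sequence E = (e_1,...,e_n) with all consecutive gaps e_i − e_{i−1} in [1, N), the LoR cost satisfies Σ_{i=1}^{N} α_i · JR_{ℓ_{β_i}}(E) = JR_ℓ(E), where JR_f(E) = Σ_{k=2}^{n} f(e_k − e_{k−1}). -/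
import Mathlib

open Finset

private lemma key_sum (N : ℕ) (ℓ : ℕ → ℝ) (hzero : ℓ 0 = 0) (d : ℕ) (hd1 : 1 ≤ d)
    (hdN : d < N) :
    ∑ i ∈ Finset.Icc 1 N,
      ((i : ℝ) * (2 * ℓ i - (if i + 1 > N then ℓ N else ℓ (i + 1)) - ℓ (i - 1))) *
        min 1 ((d : ℝ) / (i : ℝ)) = ℓ d := by
  have hN1 : 1 ≤ N := le_of_lt (lt_of_le_of_lt hd1 hdN)
  set g : ℕ → ℝ := fun j => ℓ (min (j + 1) N) - ℓ (min j N) with hg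
  set F : ℕ → ℝ := fun j => ((min j d : ℕ) : ℝ) * g (j - 1) with hF
  have hstep : ∀ i ∈ Finset.Icc 1 N,
      ((i : ℝ) * (2 * ℓ i - (if i + 1 > N then ℓ N else ℓ (i + 1)) - ℓ (i - 1))) *
        min 1 ((d : ℝ) / (i : ℝ))
      = (F i - F (i + 1)) + (if i < d then g i else 0) := by
    intro i hi
    simp only [Finset.mem_Icc] at hi
    obtain ⟨hi1, hiN⟩ := hi
    have hipos : (0 : ℝ) < (i : ℝ) := by exact_mod_cast hi1
    have hminiN : min i N = i := min_eq_left hiN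
    have hminim1 : min (i - 1) N = i - 1 := min_eq_left (by omega)
    have hclip : (if i + 1 > N then ℓ N else ℓ (i + 1)) = ℓ (min (i + 1) N) := by
      split_ifs with h
      · rw [min_eq_right (by omega)]
      · rw [min_eq_left (by omega)]
    have hgi1 : g (i - 1) = ℓ i - ℓ (i - 1) := by
      simp only [hg]
      rw [show i - 1 + 1 = i by omega, hminiN, hminim1]
    rw [hclip]
    rcases lt_or_ge i d with hid | hdi
    · -- i < d : min = 1
      have hmin1 : min 1 ((d : ℝ) / (i : ℝ)) = 1 := by
        rw [min_eq_left]
        rw [le_div_iff₀ hipos, one_mul]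
        exact_mod_cast le_of_lt hid
      have h1 : min i d = i := min_eq_left (le_of_lt hid)
      have h2 : min (i + 1) d = i + 1 := min_eq_left (by omega)
      rw [hmin1, if_pos hid]
      simp only [hF, h1, h2, show i + 1 - 1 = i by omega, hgi1]
      simp only [hg, hminiN]
      push_cast
      ring
    · -- d ≤ i : min = d/i
      have hmin1 : min 1 ((d : ℝ) / (i : ℝ)) = (d : ℝ) / (i : ℝ) := by
        rw [min_eq_right]
        rw [div_le_one hipos]
        exact_mod_cast hdi
      have h1 : min i d = d := min_eq_right hdi
      have h2 : min (i + 1) d = d := min_eq_right (by omega)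
      rw [hmin1, if_neg (not_lt.mpr hdi)]
      simp only [hF, h1, h2, show i + 1 - 1 = i by omega, hgi1]
      simp only [hg, hminiN]
      field_simp
      ring
  rw [Finset.sum_congr rfl hstep, Finset.sum_add_distrib]
  have htel1 : ∑ i ∈ Finset.Icc 1 N, (F i - F (i + 1)) = ℓ 1 := by
    rw [← Finset.Ico_add_one_right_eq_Icc, Finset.sum_Ico_eq_sum_range]
    simp only [show N + 1 - 1 = N from rfl]
    have : ∀ j ∈ Finset.range N, F (1 + j) - F (1 + j + 1)
        = (fun j => F (j + 1)) j - (fun j => F (j + 1)) (j + 1) := by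
      intro j _
      simp [add_comm 1 j]
    rw [Finset.sum_congr rfl this, Finset.sum_range_sub']
    have hFN : F (N + 1) = 0 := by
      simp only [hF, hg]
      rw [show N + 1 - 1 = N from rfl, min_eq_right (Nat.le_succ N), min_self]
      ring
    have hF1 : F 1 = ℓ 1 := by
      simp only [hF, hg]
      rw [min_eq_left hd1, min_eq_left hN1]
      simp [hzero]
    rw [hFN, hF1, sub_zero]
  have htel2 : ∑ i ∈ Finset.Icc 1 N, (if i < d then g i else 0) = ℓ d - ℓ 1 := by
    rw [← Finset.sum_filter]
    have hfilt : (Finset.Icc 1 N).filter (· < d) = Finset.Icc 1 (d - 1) := by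
      ext x
      simp only [Finset.mem_filter, Finset.mem_Icc]
      omega
    rw [hfilt, ← Finset.Ico_add_one_right_eq_Icc, Finset.sum_Ico_eq_sum_range]
    have : ∀ j ∈ Finset.range (d - 1 + 1 - 1), g (1 + j)
        = (fun j => ℓ (min (j + 1) N)) (j + 1) - (fun j => ℓ (min (j + 1) N)) j := by
      intro j _
      simp only [hg]
      congr 1
      · congr 1; omega
      · congr 1; omega
    rw [Finset.sum_congr rfl this,
      Finset.sum_range_sub (fun j => ℓ (min (j + 1) N)) (d - 1 + 1 - 1)]
    rw [show d - 1 + 1 - 1 = d - 1 from rfl, show d - 1 + 1 = d by omega]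
    rw [min_eq_left (le_of_lt hdN), min_eq_left hN1]
  rw [htel1, htel2]
  ring

theorem lin_comb_sum (N n : ℕ) (ℓ : ℕ → ℝ) (hnonneg : ∀ i, 0 ≤ ℓ i) (hmono : Monotone ℓ)
    (hzero : ℓ 0 = 0)
    (hconcave : ∀ i, 1 ≤ i → ℓ (i + 1) + ℓ (i - 1) ≤ 2 * ℓ i)
    (e : ℕ → ℕ) (he : Monotone e)
    (hgaps : ∀ k, k < n - 1 → 1 ≤ e (k + 1) - e k ∧ e (k + 1) - e k < N) :
    ∑ i ∈ Finset.Icc 1 N,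
      ((i : ℝ) * (2 * ℓ i - (if i + 1 > N then ℓ N else ℓ (i + 1)) - ℓ (i - 1))) *
        (∑ k ∈ Finset.range (n - 1), min 1 (((e (k + 1) - e k : ℕ) : ℝ) / (i : ℝ)))
    = ∑ k ∈ Finset.range (n - 1), ℓ (e (k + 1) - e k) := by
  simp_rw [Finset.mul_sum]
  rw [Finset.sum_comm]
  apply Finset.sum_congr rfl
  intro k hk
  rw [Finset.mem_range] at hk
  obtain ⟨h1, h2⟩ := hgaps k hk
  exact key_sum N ℓ hzero _ h1 h2
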